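/- Let h : G ↷ H be an actor between étale groupoids, and let U ⊆ G and V ⊆ H be open bisections. Then the set U·V = {γ·x : γ ∈ U, x ∈ V, s(γ) = ρ(x)} is an open bisection of H, and every y ∈ U·V has a unique representation y = γ·x with (γ, x) ∈ U ×_{s,ρ} V. -/

import Mathlib

open Topology

/-- A topological groupoid: a set with a partially defined multiplication
(`D a b` expresses composability), an inversion, satisfying the groupoid
axioms, such that inversion is continuous and multiplication is continuous
on the set of composable pairs. -/
structure TopGroupoid (G : Type*) [TopologicalSpace G] where
  /-- composability -/
  D : G → G → Prop
  /-- partially defined multiplication (junk values off `D`) -/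
  comp : G → G → G
  /-- inversion -/
  inv : G → G
  inv_inv : ∀ g, inv (inv g) = g
  d_inv : ∀ g, D g (inv g)
  d_eq : ∀ a b, D a b ↔ comp (inv a) a = comp b (inv b)
  d_comp_left : ∀ {a b c}, D a b → D b c → D (comp a b) c
  d_comp_right : ∀ {a b c}, D a b → D b c → D a (comp b c)
  assoc : ∀ {a b c}, D a b → D b c → comp (comp a b) c = comp a (comp b c)
  cancel_left : ∀ {g h}, D g h → comp (inv g) (comp g h) = h
  cancel_right : ∀ {g h}, D g h → comp (comp g h) (inv h) = g
  continuous_inv : Continuous inv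
  continuousOn_comp : ContinuousOn (fun p : G × G => comp p.1 p.2) {p | D p.1 p.2}

namespace TopGroupoid

variable {G : Type*} [TopologicalSpace G]

/-- The source map `s(γ) = γ⁻¹γ`. -/
def src (S : TopGroupoid G) (g : G) : G := S.comp (S.inv g) g

/-- The range map `r(γ) = γγ⁻¹`. -/
def rng (S : TopGroupoid G) (g : G) : G := S.comp g (S.inv g)

/-- The unit space `G⁽⁰⁾ = {γ⁻¹γ : γ ∈ G}`. -/
def unitSpace (S : TopGroupoid G) : Set G := Set.range S.src

/-- A groupoid is étale if its range map is a local homeomorphism. -/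
def IsEtale (S : TopGroupoid G) : Prop := IsLocalHomeomorph S.rng

/-- An open bisection: an open set on which both the source and the range map
are injective (hence, in an étale groupoid, restrict to homeomorphisms onto
their open images). -/
def IsOpenBisection (S : TopGroupoid G) (U : Set G) : Prop :=
  IsOpen U ∧ Set.InjOn S.src U ∧ Set.InjOn S.rng U

/-- Pointwise product of subsets: `U·V = {γη : γ ∈ U, η ∈ V, s γ = r η}`. -/
def setMul (S : TopGroupoid G) (U V : Set G) : Set G :=
  {g | ∃ a ∈ U, ∃ b ∈ V, S.D a b ∧ g = S.comp a b}

/-- Pointwise inverse of a subset: `U⁻¹ = {γ⁻¹ : γ ∈ U}`. -/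
def setInv (S : TopGroupoid G) (U : Set G) : Set G := S.inv '' U

end TopGroupoid

/-- An actor `G ↷ H`: a continuous left action of `G` on `H` (with anchor map
`ρ : H → G⁽⁰⁾`) which commutes with the right multiplication of `H` on itself. -/
structure Actor {G : Type*} {H : Type*} [TopologicalSpace G] [TopologicalSpace H]
    (S : TopGroupoid G) (T : TopGroupoid H) where
  /-- the anchor map -/
  rho : H → G
  /-- the action multiplication, partially defined (junk off `s γ = ρ x`) -/
  act : G → H → H
  rho_mem : ∀ x, rho x ∈ S.unitSpace
  continuous_rho : Continuous rho
  continuousOn_act :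
    ContinuousOn (fun p : G × H => act p.1 p.2) {p | S.src p.1 = rho p.2}
  rho_act : ∀ {γ x}, S.src γ = rho x → rho (act γ x) = S.rng γ
  act_assoc : ∀ {γ₁ γ₂ x}, S.D γ₁ γ₂ → S.src γ₂ = rho x →
      act γ₁ (act γ₂ x) = act (S.comp γ₁ γ₂) x
  act_unit : ∀ x, act (rho x) x = x
  rho_comp : ∀ {x y}, T.D x y → rho (T.comp x y) = rho x
  src_act : ∀ {γ x}, S.src γ = rho x → T.src (act γ x) = T.src x
  act_right : ∀ {γ x y}, S.src γ = rho x → T.D x y →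
      act γ (T.comp x y) = T.comp (act γ x) y

namespace Actor

variable {G H : Type*} [TopologicalSpace G] [TopologicalSpace H]
variable {S : TopGroupoid G} {T : TopGroupoid H}

/-- An actor is free if the only arrows fixing a unit are units. -/
def Free (A : Actor S T) : Prop :=
  ∀ t ∈ T.unitSpace, ∀ γ : G, S.src γ = A.rho t → A.act γ t = t → γ ∈ S.unitSpace

/-- An actor is proper if the anchor map restricted to the unit space of `H`
is a proper map. -/
def Proper (A : Actor S T) : Prop := IsProperMap (T.unitSpace.restrict A.rho)

/-- `U·V = {γ·x : γ ∈ U, x ∈ V, s γ = ρ x}`. -/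
def actSet (A : Actor S T) (U : Set G) (V : Set H) : Set H :=
  {y | ∃ γ ∈ U, ∃ x ∈ V, S.src γ = A.rho x ∧ y = A.act γ x}

end Actor


namespace TopGroupoid

section Aux

variable {G : Type*} [TopologicalSpace G] (S : TopGroupoid G)

lemma aux_d_inv_self (g : G) : S.D (S.inv g) g := by
  rw [S.d_eq, S.inv_inv]

lemma aux_src_inv (g : G) : S.src (S.inv g) = S.rng g := by
  unfold src rng; rw [S.inv_inv]

lemma aux_rng_inv (g : G) : S.rng (S.inv g) = S.src g := by
  unfold src rng; rw [S.inv_inv]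

lemma aux_rng_comp {a b : G} (h : S.D a b) : S.rng (S.comp a b) = S.rng a := by
  have h1 : S.D (S.inv a) (S.comp a b) := S.d_comp_right (S.aux_d_inv_self a) h
  have h2 := (S.d_eq _ _).mp h1
  rw [S.inv_inv] at h2
  exact h2.symm

lemma aux_src_comp {a b : G} (h : S.D a b) : S.src (S.comp a b) = S.src b := by
  have h1 : S.D (S.comp a b) (S.inv b) := S.d_comp_left h (S.d_inv b)
  have h2 := (S.d_eq _ _).mp h1
  rw [S.inv_inv] at h2
  exact h2

lemma aux_rng_comp_self (g : G) : S.comp (S.rng g) g = g := by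
  have h := S.cancel_right (S.d_inv g)
  rwa [S.inv_inv] at h

lemma aux_src_rng (g : G) : S.src (S.rng g) = S.rng g := by
  have h : S.src (S.comp g (S.inv g)) = S.src (S.inv g) := S.aux_src_comp (S.d_inv g)
  rw [S.aux_src_inv] at h
  exact h

lemma aux_d_rng_self (g : G) : S.D (S.rng g) g := (S.d_eq _ _).mpr (S.aux_src_rng g)

end Aux

end TopGroupoid

namespace Actor

section Aux

variable {G H : Type*} [TopologicalSpace G] [TopologicalSpace H]
variable {S : TopGroupoid G} {T : TopGroupoid H} (A : Actor S T)

lemma aux_rho_rng (y : H) : A.rho (T.rng y) = A.rho y := by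
  have h := A.rho_comp (T.aux_d_rng_self y)
  rw [T.aux_rng_comp_self] at h
  exact h.symm

lemma aux_act_inv_act {gamma : G} {x : H} (h : S.src gamma = A.rho x) :
    A.act (S.inv gamma) (A.act gamma x) = x := by
  rw [A.act_assoc (S.aux_d_inv_self gamma) h]
  show A.act (S.src gamma) x = x
  rw [h, A.act_unit]

lemma aux_act_act_inv {gamma : G} {y : H} (h : S.rng gamma = A.rho y) :
    A.act gamma (A.act (S.inv gamma) y) = y := by
  have h' : S.src (S.inv gamma) = A.rho y := by rw [S.aux_src_inv]; exact h
  rw [A.act_assoc (S.d_inv gamma) h']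
  show A.act (S.rng gamma) y = y
  rw [h, A.act_unit]

lemma aux_rng_act {gamma : G} {x : H} (h : S.src gamma = A.rho x) :
    T.rng (A.act gamma x) = T.rng (A.act gamma (T.rng x)) := by
  have hrho : S.src gamma = A.rho (T.rng x) := by rw [A.aux_rho_rng]; exact h
  have h1 := A.act_right hrho (T.aux_d_rng_self x)
  rw [T.aux_rng_comp_self] at h1
  have h2 : T.src (A.act gamma (T.rng x)) = T.rng x := by
    rw [A.src_act hrho, T.aux_src_rng]
  rw [h1]
  exact T.aux_rng_comp ((T.d_eq _ _).mpr h2)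

end Aux

end Actor

/-- For an actor `h : G ↷ H` between étale groupoids and open bisections
`U ⊆ G`, `V ⊆ H`, the set `U·V = {γ·x : γ ∈ U, x ∈ V, s γ = ρ x}` is an open
bisection of `H`, and every element of `U·V` has a unique representation
`γ·x` with `(γ, x) ∈ U ×_{s,ρ} V`. -/
theorem actSet_isOpenBisection {G H : Type*} [TopologicalSpace G] [TopologicalSpace H]
    {S : TopGroupoid G} {T : TopGroupoid H} (hS : S.IsEtale) (hT : T.IsEtale)
    (A : Actor S T) (U : Set G) (V : Set H)
    (hU : S.IsOpenBisection U) (hV : T.IsOpenBisection V) :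
    T.IsOpenBisection (A.actSet U V) ∧
    ∀ y ∈ A.actSet U V, ∃! p : G × H,
      p.1 ∈ U ∧ p.2 ∈ V ∧ S.src p.1 = A.rho p.2 ∧ y = A.act p.1 p.2 := by
  -- uniqueness of representations
  have key : ∀ γ ∈ U, ∀ x ∈ V, ∀ γ' ∈ U, ∀ x' ∈ V,
      S.src γ = A.rho x → S.src γ' = A.rho x' → A.act γ x = A.act γ' x' →
      γ = γ' ∧ x = x' := by
    intro γ hγ x hx γ' hγ' x' hx' hc hc' heq
    have hsx : T.src x = T.src x' := by
      rw [← A.src_act hc, ← A.src_act hc', heq]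
    have hxx : x = x' := hV.2.1 hx hx' hsx
    subst hxx
    exact ⟨hU.2.1 hγ hγ' (by rw [hc, hc']), rfl⟩
  have hsrcinj : Set.InjOn T.src (A.actSet U V) := by
    rintro y ⟨γ, hγ, x, hx, hc, rfl⟩ y' ⟨γ', hγ', x', hx', hc', rfl⟩ hs
    have hsx : T.src x = T.src x' := by rw [← A.src_act hc, ← A.src_act hc']; exact hs
    have hxx := hV.2.1 hx hx' hsx
    subst hxx
    have hγγ : γ = γ' := hU.2.1 hγ hγ' (by rw [hc, hc'])
    rw [hγγ]
  have hrnginj : Set.InjOn T.rng (A.actSet U V) := by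
    rintro y ⟨γ, hγ, x, hx, hc, rfl⟩ y' ⟨γ', hγ', x', hx', hc', rfl⟩ hr
    have hρ : A.rho (A.act γ x) = A.rho (A.act γ' x') := by
      rw [← A.aux_rho_rng (A.act γ x), ← A.aux_rho_rng (A.act γ' x'), hr]
    rw [A.rho_act hc, A.rho_act hc'] at hρ
    have hγγ : γ = γ' := hU.2.2 hγ hγ' hρ
    subst hγγ
    have h1 : S.src (S.inv γ) = A.rho (A.act γ x) := by
      rw [S.aux_src_inv, A.rho_act hc]
    have h1' : S.src (S.inv γ) = A.rho (A.act γ x') := by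
      rw [S.aux_src_inv, A.rho_act hc']
    have e1 := A.aux_rng_act h1
    have e1' := A.aux_rng_act h1'
    rw [A.aux_act_inv_act hc] at e1
    rw [A.aux_act_inv_act hc'] at e1'
    have h2 : T.rng x = T.rng x' := by rw [e1, e1', hr]
    rw [hV.2.2 hx hx' h2]
  have hopen : IsOpen (A.actSet U V) := by
    rw [isOpen_iff_forall_mem_open]
    rintro y₀ ⟨γ₀, hγ₀, x₀, hx₀, hc₀, rfl⟩
    obtain ⟨e, heγ, herng⟩ := hS γ₀
    set O : Set G := e '' (U ∩ e.source) with hO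
    have hOopen : IsOpen O :=
      e.isOpen_image_of_subset_source (hU.1.inter e.open_source) Set.inter_subset_right
    have hOsub : O ⊆ e.target := by
      rintro t ⟨g, hg, rfl⟩; exact e.map_source hg.2
    set W : Set H := A.rho ⁻¹' O with hW
    have hWopen : IsOpen W := hOopen.preimage A.continuous_rho
    set σ : H → G := fun y => e.symm (A.rho y) with hσ
    have hrngσ : ∀ y ∈ W, S.rng (σ y) = A.rho y := by
      intro y hy
      rw [herng]
      exact e.right_inv (hOsub hy)
    have hsrcinvσ : ∀ y ∈ W, S.src (S.inv (σ y)) = A.rho y := by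
      intro y hy; rw [S.aux_src_inv]; exact hrngσ y hy
    have hσcont : ContinuousOn σ W :=
      e.continuousOn_symm.comp A.continuous_rho.continuousOn (fun y hy => hOsub hy)
    have hpair : ContinuousOn (fun y : H => (S.inv (σ y), y)) W :=
      (S.continuous_inv.comp_continuousOn hσcont).prodMk continuousOn_id
    have hΦcont : ContinuousOn (fun y => A.act (S.inv (σ y)) y) W :=
      A.continuousOn_act.comp hpair (fun y hy => hsrcinvσ y hy)
    set N : Set H := W ∩ (fun y => (σ y, A.act (S.inv (σ y)) y)) ⁻¹' (U ×ˢ V) with hN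
    have hNopen : IsOpen N :=
      (hσcont.prodMk hΦcont).isOpen_inter_preimage hWopen (hU.1.prod hV.1)
    refine ⟨N, ?_, hNopen, ?_⟩
    · rintro y ⟨hyW, hyUV⟩
      refine ⟨σ y, hyUV.1, A.act (S.inv (σ y)) y, hyUV.2, ?_, ?_⟩
      · rw [A.rho_act (hsrcinvσ y hyW), S.aux_rng_inv]
      · exact (A.aux_act_act_inv (hrngσ y hyW)).symm
    · have hρ0 : A.rho (A.act γ₀ x₀) = S.rng γ₀ := A.rho_act hc₀
      have hmemO : A.rho (A.act γ₀ x₀) ∈ O := by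
        rw [hρ0, herng]
        exact ⟨γ₀, ⟨hγ₀, heγ⟩, rfl⟩
      have hσ0 : σ (A.act γ₀ x₀) = γ₀ := by
        show e.symm (A.rho (A.act γ₀ x₀)) = γ₀
        rw [hρ0, herng]
        exact e.left_inv heγ
      refine ⟨hmemO, ?_, ?_⟩
      · show σ (A.act γ₀ x₀) ∈ U
        rw [hσ0]; exact hγ₀
      · show A.act (S.inv (σ (A.act γ₀ x₀))) (A.act γ₀ x₀) ∈ V
        rw [hσ0, A.aux_act_inv_act hc₀]; exact hx₀
  refine ⟨⟨hopen, hsrcinj, hrnginj⟩, ?_⟩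
  rintro y ⟨γ, hγ, x, hx, hc, rfl⟩
  refine ⟨(γ, x), ⟨hγ, hx, hc, rfl⟩, ?_⟩
  rintro ⟨γ', x'⟩ ⟨hγ', hx', hc', heq⟩
  obtain ⟨h1, h2⟩ := key γ' hγ' x' hx' γ hγ x hx hc' hc heq.symm
  simp [h1, h2]
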